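/- Let T = {(x,y) ∈ ℝ² : x ≥ 0, y ≥ 0, x + y ≤ 1} be the standard reference triangle and let b(x,y) = 27·x·y·(1 − x − y) be the reference element bubble function. For every natural number m there exists a constant C > 0 such that for every real polynomial p in two variables of total degree at most m, both ∫_T p(x,y)² dx dy ≤ C · ∫_T (b(x,y)·p(x,y))² dx dy and ∫_T (b(x,y)²·p(x,y))² dx dy ≤ C · ∫_T p(x,y)² dx dy hold. -/

import Mathlib

open MeasureTheory Real

/-- The standard reference triangle `T = {(x,y) : x ≥ 0, y ≥ 0, x + y ≤ 1}` in ℝ². -/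
def T : Set (EuclideanSpace ℝ (Fin 2)) := {x | 0 ≤ x 0 ∧ 0 ≤ x 1 ∧ x 0 + x 1 ≤ 1}

/-- The reference element bubble function `b(x,y) = 27·x·y·(1 − x − y)`. -/
noncomputable def bub (x : EuclideanSpace ℝ (Fin 2)) : ℝ :=
  27 * x 0 * x 1 * (1 - x 0 - x 1)


lemma capp (i : Fin 2) : Continuous fun x : EuclideanSpace ℝ (Fin 2) => x i :=
  (continuous_apply i).comp (PiLp.continuous_ofLp 2 _)

lemma contbub : Continuous bub := by
  unfold bub
  exact (((continuous_const.mul (capp 0)).mul (capp 1)).mul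
    ((continuous_const.sub (capp 0)).sub (capp 1)))

noncomputable def Pm (m : ℕ) (c : Fin (m+1) × Fin (m+1) → ℝ)
    (x : EuclideanSpace ℝ (Fin 2)) : ℝ :=
  ∑ ij : Fin (m+1) × Fin (m+1), c ij * x 0 ^ (ij.1:ℕ) * x 1 ^ (ij.2:ℕ)

lemma contPm (m : ℕ) (c : Fin (m+1) × Fin (m+1) → ℝ) : Continuous (Pm m c) := by
  unfold Pm
  apply continuous_finset_sum
  intro ij _
  exact (continuous_const.mul ((capp 0).pow _)).mul ((capp 1).pow _)

lemma Pm_smul (m : ℕ) (c : Fin (m+1) × Fin (m+1) → ℝ) (r : ℝ) (x : EuclideanSpace ℝ (Fin 2)) :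
    Pm m (r • c) x = r * Pm m c x := by
  unfold Pm
  rw [Finset.mul_sum]
  exact Finset.sum_congr rfl fun ij _ => by simp [smul_eq_mul]; ring

lemma Pm_zero (m : ℕ) (x : EuclideanSpace ℝ (Fin 2)) : Pm m 0 x = 0 := by simp [Pm]

lemma Tclosed : IsClosed T :=
  (isClosed_le continuous_const (capp 0)).inter
    ((isClosed_le continuous_const (capp 1)).inter
      (isClosed_le ((capp 0).add (capp 1)) continuous_const))

lemma Tmeas : MeasurableSet T := Tclosed.measurableSet

lemma Tcompact : IsCompact T := by
  apply Metric.isCompact_of_isClosed_isBounded Tclosed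
  apply isBounded_iff_forall_norm_le.mpr
  refine ⟨2, fun x hx => ?_⟩
  obtain ⟨h0, h1, h2⟩ := hx
  rw [EuclideanSpace.norm_eq]
  have : ∑ i, ‖x i‖^2 ≤ 4 := by
    rw [Fin.sum_univ_two]
    have e0 : |x 0| ≤ 1 := by rw [abs_le]; constructor <;> nlinarith
    have e1 : |x 1| ≤ 1 := by rw [abs_le]; constructor <;> nlinarith
    simp only [Real.norm_eq_abs]
    nlinarith [abs_nonneg (x 0), abs_nonneg (x 1)]
  calc √(∑ i, ‖x i‖^2) ≤ √4 := Real.sqrt_le_sqrt this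
  _ ≤ 2 := by rw [show (4:ℝ) = 2^2 by norm_num, Real.sqrt_sq]; norm_num

lemma integrableOnT {f : EuclideanSpace ℝ (Fin 2) → ℝ} (hf : Continuous f) :
    IntegrableOn f T := hf.continuousOn.integrableOn_compact Tcompact

noncomputable def Gfun (m : ℕ) (c : Fin (m+1) × Fin (m+1) → ℝ) : ℝ :=
  ∫ x in T, (Pm m c x) ^ 2

noncomputable def Ffun (m : ℕ) (c : Fin (m+1) × Fin (m+1) → ℝ) : ℝ :=
  ∫ x in T, (bub x * Pm m c x) ^ 2

-- expansion of the weighted quadratic form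
lemma quad_expand (m : ℕ) (w : EuclideanSpace ℝ (Fin 2) → ℝ) (hw : Continuous w)
    (c : Fin (m+1) × Fin (m+1) → ℝ) :
    (∫ x in T, w x * (Pm m c x) ^ 2) =
      ∑ q : (Fin (m+1) × Fin (m+1)) × (Fin (m+1) × Fin (m+1)),
        c q.1 * c q.2 * ∫ x in T,
          w x * (x 0 ^ (q.1.1:ℕ) * x 1 ^ (q.1.2:ℕ) * (x 0 ^ (q.2.1:ℕ) * x 1 ^ (q.2.2:ℕ))) := by
  have hsq : ∀ x : EuclideanSpace ℝ (Fin 2), w x * (Pm m c x) ^ 2 =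
      ∑ q : (Fin (m+1) × Fin (m+1)) × (Fin (m+1) × Fin (m+1)),
        c q.1 * c q.2 *
          (w x * (x 0 ^ (q.1.1:ℕ) * x 1 ^ (q.1.2:ℕ) * (x 0 ^ (q.2.1:ℕ) * x 1 ^ (q.2.2:ℕ)))) := by
    intro x
    conv_rhs => rw [Fintype.sum_prod_type]
    rw [sq, Pm, Finset.sum_mul_sum, Finset.mul_sum]
    refine Finset.sum_congr rfl fun a _ => ?_
    rw [Finset.mul_sum]
    exact Finset.sum_congr rfl fun b _ => by ring
  rw [MeasureTheory.integral_congr_ae (Filter.Eventually.of_forall hsq)]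
  rw [MeasureTheory.integral_finset_sum]
  · apply Finset.sum_congr rfl
    intro q _
    rw [MeasureTheory.integral_const_mul]
  · intro q _
    apply Integrable.const_mul
    apply integrableOnT
    exact hw.mul ((((capp 0).pow _).mul ((capp 1).pow _)).mul
      (((capp 0).pow _).mul ((capp 1).pow _)))

lemma contG (m : ℕ) : Continuous (Gfun m) := by
  have : Gfun m = fun c => ∑ q : (Fin (m+1) × Fin (m+1)) × (Fin (m+1) × Fin (m+1)),
      c q.1 * c q.2 * ∫ x in T,
        (1:ℝ) * (x 0 ^ (q.1.1:ℕ) * x 1 ^ (q.1.2:ℕ) * (x 0 ^ (q.2.1:ℕ) * x 1 ^ (q.2.2:ℕ))) := by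
    funext c
    rw [← quad_expand m (fun _ => (1:ℝ)) continuous_const c]
    unfold Gfun
    congr 1
    funext x
    ring
  rw [this]
  apply continuous_finset_sum
  intro q _
  exact ((continuous_apply q.1).mul (continuous_apply q.2)).mul continuous_const

lemma contF (m : ℕ) : Continuous (Ffun m) := by
  have : Ffun m = fun c => ∑ q : (Fin (m+1) × Fin (m+1)) × (Fin (m+1) × Fin (m+1)),
      c q.1 * c q.2 * ∫ x in T,
        (bub x)^2 * (x 0 ^ (q.1.1:ℕ) * x 1 ^ (q.1.2:ℕ) * (x 0 ^ (q.2.1:ℕ) * x 1 ^ (q.2.2:ℕ))) := by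
    funext c
    rw [← quad_expand m (fun x => (bub x)^2) (contbub.pow 2) c]
    unfold Ffun
    congr 1
    funext x
    ring
  rw [this]
  apply continuous_finset_sum
  intro q _
  exact ((continuous_apply q.1).mul (continuous_apply q.2)).mul continuous_const

lemma poly_aux {n : ℕ} (a : Fin n → ℝ)
    (h : ∀ y ∈ Set.Ioo (1/8:ℝ) (1/4), ∑ j, a j * y ^ (j:ℕ) = 0) : a = 0 := by
  set q : Polynomial ℝ := ∑ j : Fin n, Polynomial.monomial (j:ℕ) (a j) with hq
  have heval : ∀ y : ℝ, q.eval y = ∑ j, a j * y ^ (j:ℕ) := by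
    intro y
    simp [hq, Polynomial.eval_finset_sum, Polynomial.eval_monomial]
  have hq0 : q = 0 := by
    apply Polynomial.eq_zero_of_infinite_isRoot
    apply (Set.Ioo_infinite (show (1/8:ℝ) < 1/4 by norm_num)).mono
    intro y hy
    simp only [Set.mem_setOf_eq, Polynomial.IsRoot, heval]
    exact h y hy
  funext j
  have : q.coeff (j:ℕ) = a j := by
    rw [hq, Polynomial.finset_sum_coeff]
    rw [Finset.sum_eq_single j]
    · simp [Polynomial.coeff_monomial]
    · intro b _ hb
      rw [Polynomial.coeff_monomial, if_neg (fun hc => hb (Fin.ext hc))]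
    · simp
  rw [hq0] at this
  simpa using this.symm
lemma box_aux {m : ℕ} (c : Fin (m+1) × Fin (m+1) → ℝ)
    (h : ∀ x ∈ Set.Ioo (1/8:ℝ) (1/4), ∀ y ∈ Set.Ioo (1/8:ℝ) (1/4),
      ∑ ij : Fin (m+1) × Fin (m+1), c ij * x ^ (ij.1:ℕ) * y ^ (ij.2:ℕ) = 0) : c = 0 := by
  have key : ∀ y ∈ Set.Ioo (1/8:ℝ) (1/4), ∀ i : Fin (m+1), ∑ j, c (i,j) * y ^ (j:ℕ) = 0 := by
    intro y hy i
    have := poly_aux (fun i => ∑ j, c (i,j) * y ^ (j:ℕ)) (fun x hx => by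
      rw [← h x hx y hy, Fintype.sum_prod_type]
      simp only [Finset.sum_mul]
      exact Finset.sum_congr rfl fun i _ => Finset.sum_congr rfl fun j _ => by ring)
    exact congrFun this i
  funext ij
  obtain ⟨i, j⟩ := ij
  have := poly_aux (fun j => c (i,j)) (fun y hy => key y hy i)
  exact congrFun this j

def Box : Set (EuclideanSpace ℝ (Fin 2)) :=
  {x | x 0 ∈ Set.Ioo (1/8:ℝ) (1/4) ∧ x 1 ∈ Set.Ioo (1/8:ℝ) (1/4)}

lemma Box_open : IsOpen Box :=
  (isOpen_Ioo.preimage (capp 0)).inter (isOpen_Ioo.preimage (capp 1))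

lemma Box_subset_T : Box ⊆ T := by
  rintro x ⟨⟨a0, b0⟩, a1, b1⟩
  exact ⟨by linarith, by linarith, by linarith⟩

lemma bub_pos_on_Box {x : EuclideanSpace ℝ (Fin 2)} (hx : x ∈ Box) : 0 < bub x := by
  obtain ⟨⟨a0, b0⟩, a1, b1⟩ := hx
  unfold bub
  have : (0:ℝ) < 1 - x 0 - x 1 := by linarith
  positivity

lemma F_pos (m : ℕ) (c : Fin (m+1) × Fin (m+1) → ℝ) (hc : c ≠ 0) : 0 < Ffun m c := by
  have hg : Continuous fun x => (bub x * Pm m c x) ^ 2 :=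
    (contbub.mul (contPm m c)).pow 2
  have hFnn : 0 ≤ Ffun m c := by
    apply integral_nonneg
    intro x
    exact sq_nonneg _
  rcases hFnn.lt_or_eq with h | h
  · exact h
  exfalso
  -- F c = 0 ⇒ integrand a.e. zero on T
  have hae : (fun x => (bub x * Pm m c x) ^ 2) =ᵐ[volume.restrict T] 0 := by
    rw [← MeasureTheory.integral_eq_zero_iff_of_nonneg (fun x => sq_nonneg _)
      (integrableOnT hg)]
    exact h.symm
  -- the integrand vanishes on the box
  have hvanish : ∀ x ∈ Box, Pm m c x = 0 := by
    intro x0 hx0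
    by_contra hne
    have hgx : 0 < (bub x0 * Pm m c x0) ^ 2 := by
      have hne' : bub x0 * Pm m c x0 ≠ 0 := mul_ne_zero (bub_pos_on_Box hx0).ne' hne
      positivity
    set V := Box ∩ {x | 0 < (bub x * Pm m c x) ^ 2} with hV
    have hVopen : IsOpen V := Box_open.inter (isOpen_lt continuous_const hg)
    have hVmem : x0 ∈ V := ⟨hx0, hgx⟩
    have hVsub : V ⊆ T := fun x hx => Box_subset_T hx.1
    have hnull : (volume.restrict T) {x | (bub x * Pm m c x) ^ 2 ≠ 0} = 0 := by
      have h2 : ∀ᵐ x ∂(volume.restrict T), (bub x * Pm m c x) ^ 2 = 0 :=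
        hae.mono fun x hx => hx
      simpa [MeasureTheory.ae_iff] using h2
    have hVnull : (volume.restrict T) V = 0 :=
      measure_mono_null (fun x hx => ne_of_gt hx.2) hnull
    rw [MeasureTheory.Measure.restrict_apply' Tmeas, Set.inter_eq_left.mpr hVsub] at hVnull
    exact (hVopen.measure_pos volume ⟨x0, hVmem⟩).ne' hVnull
  -- transfer to reals and conclude c = 0
  apply hc
  apply box_aux
  intro x hx y hy
  have hmem : (WithLp.toLp 2 ![x, y] : EuclideanSpace ℝ (Fin 2)) ∈ Box := by
    have e0 : (WithLp.toLp 2 ![x, y] : EuclideanSpace ℝ (Fin 2)) 0 = x := rfl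
    have e1 : (WithLp.toLp 2 ![x, y] : EuclideanSpace ℝ (Fin 2)) 1 = y := rfl
    exact ⟨by rw [e0]; exact hx, by rw [e1]; exact hy⟩
  have := hvanish _ hmem
  unfold Pm at this
  simpa using this

lemma G_smul (m : ℕ) (r : ℝ) (c : Fin (m+1) × Fin (m+1) → ℝ) :
    Gfun m (r • c) = r^2 * Gfun m c := by
  unfold Gfun
  simp only [Pm_smul]
  rw [← MeasureTheory.integral_const_mul]
  congr 1; funext x; ring

lemma F_smul (m : ℕ) (r : ℝ) (c : Fin (m+1) × Fin (m+1) → ℝ) :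
    Ffun m (r • c) = r^2 * Ffun m c := by
  unfold Ffun
  simp only [Pm_smul]
  rw [← MeasureTheory.integral_const_mul]
  congr 1; funext x; ring

lemma G_nonneg (m : ℕ) (c : Fin (m+1) × Fin (m+1) → ℝ) : 0 ≤ Gfun m c :=
  integral_nonneg fun x => sq_nonneg _

lemma F_nonneg (m : ℕ) (c : Fin (m+1) × Fin (m+1) → ℝ) : 0 ≤ Ffun m c :=
  integral_nonneg fun x => sq_nonneg _

lemma key (m : ℕ) : ∃ C ≥ 1, ∀ c : Fin (m+1) × Fin (m+1) → ℝ, Gfun m c ≤ C * Ffun m c := by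
  have hS : IsCompact (Metric.sphere (0 : Fin (m+1) × Fin (m+1) → ℝ) 1) := isCompact_sphere _ _
  have hSne : (Metric.sphere (0 : Fin (m+1) × Fin (m+1) → ℝ) 1).Nonempty := by
    refine ⟨fun _ => 1, ?_⟩
    rw [mem_sphere_zero_iff_norm]
    rw [pi_norm_const]
    norm_num
  obtain ⟨cmin, hcmin, hmin⟩ := hS.exists_isMinOn hSne (contF m).continuousOn
  obtain ⟨cmax, hcmax, hmax⟩ := hS.exists_isMaxOn hSne (contG m).continuousOn
  set ε := Ffun m cmin with hε
  set M := Gfun m cmax with hM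
  have hεpos : 0 < ε := by
    apply F_pos
    intro h0
    rw [h0, mem_sphere_zero_iff_norm, norm_zero] at hcmin
    norm_num at hcmin
  set C := max (M / ε) 1 with hC
  have hC1 : (1:ℝ) ≤ C := le_max_right _ _
  refine ⟨C, hC1, fun c => ?_⟩
  by_cases hc : c = 0
  · subst hc
    have : Pm m (0 : Fin (m+1) × Fin (m+1) → ℝ) = fun _ => 0 := funext (Pm_zero m)
    simp [Gfun, Ffun, this]
  · have hr : 0 < ‖c‖ := norm_pos_iff.mpr hc
    set u := ‖c‖⁻¹ • c with hu
    have hun : u ∈ Metric.sphere (0 : Fin (m+1) × Fin (m+1) → ℝ) 1 := by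
      rw [mem_sphere_zero_iff_norm, hu, norm_smul, norm_inv, norm_norm]
      field_simp
    have hcu : c = ‖c‖ • u := (smul_inv_smul₀ hr.ne' c).symm
    have hGu : Gfun m u ≤ C * Ffun m u := by
      calc Gfun m u ≤ M := isMaxOn_iff.mp hmax u hun
      _ = (M / ε) * ε := by field_simp
      _ ≤ C * ε := by
        apply mul_le_mul_of_nonneg_right (le_max_left _ _) hεpos.le
      _ ≤ C * Ffun m u := by
        apply mul_le_mul_of_nonneg_left (isMinOn_iff.mp hmin u hun) (le_trans zero_le_one hC1)
    calc Gfun m c = ‖c‖^2 * Gfun m u := by rw [hcu, G_smul]; rw [← hcu]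
    _ ≤ ‖c‖^2 * (C * Ffun m u) := mul_le_mul_of_nonneg_left hGu (sq_nonneg _)
    _ = C * (‖c‖^2 * Ffun m u) := by ring
    _ = C * Ffun m c := by rw [← F_smul, ← hcu]
noncomputable def coefv (m : ℕ) (p : MvPolynomial (Fin 2) ℝ) (ij : Fin (m+1) × Fin (m+1)) : ℝ :=
  MvPolynomial.coeff (Finsupp.single 0 (ij.1:ℕ) + Finsupp.single 1 (ij.2:ℕ)) p

lemma repr_aux {m : ℕ} (p : MvPolynomial (Fin 2) ℝ) (hp : p.totalDegree ≤ m)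
    (x y : ℝ) :
    MvPolynomial.eval (fun i => if i = 0 then x else y) p =
      ∑ ij : Fin (m+1) × Fin (m+1), coefv m p ij * x ^ (ij.1:ℕ) * y ^ (ij.2:ℕ) := by
  classical
  set e : Fin (m+1) × Fin (m+1) → (Fin 2 →₀ ℕ) :=
    fun ij => Finsupp.single 0 (ij.1:ℕ) + Finsupp.single 1 (ij.2:ℕ) with he
  have he0 : ∀ ij, e ij 0 = (ij.1:ℕ) := by intro ij; simp [he]
  have he1 : ∀ ij, e ij 1 = (ij.2:ℕ) := by intro ij; simp [he]
  have einj : Function.Injective e := by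
    intro a b hab
    have h0 := congrArg (fun d => d 0) hab
    have h1 := congrArg (fun d => d 1) hab
    simp only [he0, he1] at h0 h1
    exact Prod.ext (Fin.ext h0) (Fin.ext h1)
  set g : (Fin 2 →₀ ℕ) → ℝ := fun d => MvPolynomial.coeff d p * x ^ (d 0) * y ^ (d 1) with hg
  have hdsum : ∀ d : Fin 2 →₀ ℕ, d.sum (fun _ n => n) = d 0 + d 1 := by
    intro d
    rw [Finsupp.sum_fintype _ _ (fun _ => rfl), Fin.sum_univ_two]
  have hsupp : p.support ⊆ Finset.univ.image e := by
    intro d hd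
    have hdeg : d.sum (fun _ n => n) ≤ m := le_trans (MvPolynomial.le_totalDegree hd) hp
    rw [hdsum] at hdeg
    have h0 : d 0 ≤ m := by omega
    have h1 : d 1 ≤ m := by omega
    apply Finset.mem_image.mpr
    refine ⟨(⟨d 0, by omega⟩, ⟨d 1, by omega⟩), Finset.mem_univ _, ?_⟩
    ext a
    fin_cases a
    · simp [he]
    · simp [he]
  have lhs_eq : MvPolynomial.eval (fun i => if i = 0 then x else y) p = ∑ d ∈ p.support, g d := by
    rw [MvPolynomial.eval_eq]
    apply Finset.sum_congr rfl
    intro d _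
    rw [hg]
    have hprod : ∏ i ∈ d.support, (if i = 0 then x else y) ^ d i
        = ∏ i : Fin 2, (if (i:Fin 2) = 0 then x else y) ^ d i := by
      apply Finset.prod_subset (Finset.subset_univ _)
      intro i _ hi
      simp [Finsupp.notMem_support_iff.mp hi]
    rw [hprod, Fin.prod_univ_two]
    norm_num
    ring
  rw [lhs_eq]
  rw [Finset.sum_subset hsupp (fun d _ hd => by
    simp [hg, MvPolynomial.notMem_support_iff.mp hd])]
  rw [Finset.sum_image (fun a _ b _ hab => einj hab)]
  apply Finset.sum_congr rfl
  intro ij _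
  simp [hg, coefv, he0, he1, he]

lemma bub_nonneg {x : EuclideanSpace ℝ (Fin 2)} (hx : x ∈ T) : 0 ≤ bub x := by
  obtain ⟨h0, h1, h2⟩ := hx
  unfold bub
  have : (0:ℝ) ≤ 1 - x 0 - x 1 := by linarith
  positivity

lemma bub_le_one {x : EuclideanSpace ℝ (Fin 2)} (hx : x ∈ T) : bub x ≤ 1 := by
  obtain ⟨h0, h1, h2⟩ := hx
  unfold bub
  nlinarith [sq_nonneg (x 0 - x 1), sq_nonneg (x 0 + x 1 - 2/3), sq_nonneg (x 0 - 1/3),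
    sq_nonneg (x 1 - 1/3), mul_nonneg h0 h1]

/-- Bubble-function norm equivalence on the reference triangle: for every `m` there is
`C > 0` such that for all polynomials `p` of total degree at most `m`,
`‖p‖²_{L²(T)} ≤ C ‖b p‖²_{L²(T)}` and `‖b² p‖²_{L²(T)} ≤ C ‖p‖²_{L²(T)}`. -/
theorem bubble_norm_equivalence (m : ℕ) :
    ∃ C > 0, ∀ p : MvPolynomial (Fin 2) ℝ, p.totalDegree ≤ m →
      ((∫ x in T, (MvPolynomial.eval (fun i => x i) p) ^ 2) ≤
        C * ∫ x in T, (bub x * MvPolynomial.eval (fun i => x i) p) ^ 2) ∧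
      ((∫ x in T, ((bub x) ^ 2 * MvPolynomial.eval (fun i => x i) p) ^ 2) ≤
        C * ∫ x in T, (MvPolynomial.eval (fun i => x i) p) ^ 2) := by
  obtain ⟨C, hC1, hkey⟩ := key m
  refine ⟨C, lt_of_lt_of_le one_pos hC1, fun p hp => ?_⟩
  have hrepr : ∀ x : EuclideanSpace ℝ (Fin 2),
      MvPolynomial.eval (fun i => x i) p = Pm m (coefv m p) x := by
    intro x
    have harg : (fun i : Fin 2 => x i) = (fun i => if i = 0 then x 0 else x 1) := by
      funext i; fin_cases i <;> simp
    rw [harg, repr_aux p hp (x 0) (x 1)]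
    rfl
  constructor
  · have e1 : (∫ x in T, (MvPolynomial.eval (fun i => x i) p) ^ 2) = Gfun m (coefv m p) := by
      unfold Gfun; simp only [hrepr]
    have e2 : (∫ x in T, (bub x * MvPolynomial.eval (fun i => x i) p) ^ 2)
        = Ffun m (coefv m p) := by
      unfold Ffun; simp only [hrepr]
    rw [e1, e2]
    exact hkey _
  · have hfc : Continuous fun x : EuclideanSpace ℝ (Fin 2) =>
        MvPolynomial.eval (fun i => x i) p := by
      have : (fun x : EuclideanSpace ℝ (Fin 2) => MvPolynomial.eval (fun i => x i) p)
          = Pm m (coefv m p) := funext hrepr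
      rw [this]; exact contPm m _
    have step1 : (∫ x in T, ((bub x) ^ 2 * MvPolynomial.eval (fun i => x i) p) ^ 2)
        ≤ ∫ x in T, (MvPolynomial.eval (fun i => x i) p) ^ 2 := by
      apply MeasureTheory.setIntegral_mono_on
      · exact integrableOnT (((contbub.pow 2).mul hfc).pow 2)
      · exact integrableOnT (hfc.pow 2)
      · exact Tmeas
      · intro x hx
        have hb0 := bub_nonneg hx
        have hb1 := bub_le_one hx
        nlinarith [sq_nonneg (MvPolynomial.eval (fun i => x i) p),
          sq_nonneg (bub x), pow_le_one₀ hb0 hb1 (n := 4),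
          sq_nonneg (bub x ^ 2 * MvPolynomial.eval (fun i => x i) p)]
    calc (∫ x in T, ((bub x) ^ 2 * MvPolynomial.eval (fun i => x i) p) ^ 2)
        ≤ ∫ x in T, (MvPolynomial.eval (fun i => x i) p) ^ 2 := step1
    _ ≤ C * ∫ x in T, (MvPolynomial.eval (fun i => x i) p) ^ 2 := by
        apply le_mul_of_one_le_left ?_ hC1
        exact integral_nonneg fun x => sq_nonneg _
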